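/- For every index 1 ≤ a ≤ 2n and every tuple (a_1, …, a_p) of indices in {1, …, 2n}, the product σ_a · [a_1 … a_p] lies in Ω + Σ_{1 ≤ b, c ≤ 2n} σ_{bc} Ω, i.e. in the ℚ-linear span of elements ω and σ_{bc} ω′ with ω, ω′ ∈ Ω and σ_{bc} := σ_b σ_c + σ_c σ_b. (That is, σ_a Ω ⊆ U_1 ⊗ Ω in the filtration by degree in the bosonic generators.) -/

import Mathlib

open scoped BigOperators TensorProduct
open Nat

noncomputable section

/-- The symplectic metric `g` of `osp(1|2n)` (0-indexed). -/
def gmat (n : ℕ) (a b : Fin (2*n)) : ℚ :=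
  if (a:ℕ) < n ∧ (b:ℕ) = (a:ℕ) + n then -1
  else if (b:ℕ) < n ∧ (a:ℕ) = (b:ℕ) + n then 1
  else 0

/-- The defining relations of `U(osp(1|2n))`:
`(σₐσ_b + σ_bσₐ)σ_c - σ_c(σₐσ_b + σ_bσₐ) = -g_{ac} σ_b - g_{bc} σₐ`. -/
inductive OspRel (n : ℕ) : FreeAlgebra ℚ (Fin (2*n)) → FreeAlgebra ℚ (Fin (2*n)) → Prop
  | rel (a b c : Fin (2*n)) : OspRel n
      ((FreeAlgebra.ι ℚ a * FreeAlgebra.ι ℚ b + FreeAlgebra.ι ℚ b * FreeAlgebra.ι ℚ a)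
          * FreeAlgebra.ι ℚ c)
      (FreeAlgebra.ι ℚ c *
          (FreeAlgebra.ι ℚ a * FreeAlgebra.ι ℚ b + FreeAlgebra.ι ℚ b * FreeAlgebra.ι ℚ a)
        - algebraMap ℚ (FreeAlgebra ℚ (Fin (2*n))) (gmat n a c) * FreeAlgebra.ι ℚ b
        - algebraMap ℚ (FreeAlgebra ℚ (Fin (2*n))) (gmat n b c) * FreeAlgebra.ι ℚ a)

/-- The universal enveloping superalgebra `U(osp(1|2n))`. -/
abbrev U (n : ℕ) := RingQuot (OspRel n)

/-- The fermionic generators `σₐ`. -/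
def σ (n : ℕ) (a : Fin (2*n)) : U n :=
  RingQuot.mkAlgHom ℚ (OspRel n) (FreeAlgebra.ι ℚ a)

/-- The bosonic generators `σ_{ab} = σₐσ_b + σ_bσₐ`. -/
def σσ (n : ℕ) (a b : Fin (2*n)) : U n := σ n a * σ n b + σ n b * σ n a

/-- The antisymmetrized monomial `[a₁ … a_p]`. -/
def brkt (n : ℕ) (p : ℕ) (a : Fin p → Fin (2*n)) : U n :=
  ∑ s : Equiv.Perm (Fin p),
    (Equiv.Perm.sign s : ℤ) • (List.ofFn fun i => σ n (a (s i))).prod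

/-- `Ω`, the span of all the antisymmetrized monomials. -/
def Omega (n : ℕ) : Submodule ℚ (U n) :=
  Submodule.span ℚ {x | ∃ p, ∃ a : Fin p → Fin (2*n), x = brkt n p a}

open Equiv Equiv.Perm

variable {n : ℕ}

lemma sigma_comm (b c d : Fin (2*n)) :
    σ n d * σσ n b c
      = σσ n b c * σ n d + (gmat n b d) • σ n c + (gmat n c d) • σ n b := by
  have h := RingQuot.mkAlgHom_rel ℚ (OspRel.rel b c d)
  simp only [map_mul, map_add, map_sub] at h
  have h' : σσ n b c * σ n d
      = σ n d * σσ n b c - (gmat n b d) • σ n c - (gmat n c d) • σ n b := by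
    simpa [σσ, σ, Algebra.smul_def] using h
  rw [h']; abel

lemma sigma_swap (x d : Fin (2*n)) :
    σ n d * σ n x = σσ n x d - σ n x * σ n d := by
  rw [σσ]; abel

def W (l : List (Fin (2*n))) : U n := (l.map (σ n)).prod

@[simp] lemma W_nil : (W [] : U n) = 1 := rfl

@[simp] lemma W_cons (x : Fin (2*n)) (l : List (Fin (2*n))) :
    W (x :: l) = σ n x * W l := by simp [W]

lemma W_append (l₁ l₂ : List (Fin (2*n))) : W (l₁ ++ l₂) = W l₁ * (W l₂ : U n) := by
  simp [W]

section ofins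
variable {α : Type*}

lemma insertNth_succ_cons {q : ℕ} (k : Fin (q+1)) (x : α) (h : Fin (q+1) → α) :
    (k.succ).insertNth x h
      = Fin.cons (α := fun _ => α) (h 0)
          (Fin.insertNth (α := fun _ => α) k x (h ∘ Fin.succ)) := by
  funext m
  refine Fin.cases ?_ ?_ m
  · have h0 : ((k.succ).succAbove 0) = (0 : Fin (q+2)) :=
      Fin.succAbove_ne_zero_zero (Fin.succ_ne_zero k)
    rw [← h0, Fin.insertNth_apply_succAbove]
    simp [Fin.cons_zero]
  · intro m'
    rw [Fin.cons_succ]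
    refine Fin.succAboveCases k ?_ ?_ m'
    · rw [Fin.insertNth_apply_same, Fin.insertNth_apply_same]
    · intro i
      rw [Fin.insertNth_apply_succAbove, ← Fin.succ_succAbove_succ,
        Fin.insertNth_apply_succAbove]
      rfl

lemma ofFn_insertNth : ∀ {q : ℕ} (k : Fin (q+1)) (x : α) (h : Fin q → α),
    List.ofFn (k.insertNth x h)
      = (List.ofFn h).take (k:ℕ) ++ x :: (List.ofFn h).drop (k:ℕ) := by
  intro q
  induction q with
  | zero =>
    intro k x h
    have : k = 0 := by ext; omega
    subst this
    simp [Fin.insertNth_zero']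
  | succ q IH =>
    intro k x h
    refine Fin.cases ?_ ?_ k
    · simp [Fin.insertNth_zero']
    · intro k'
      rw [insertNth_succ_cons]
      rw [show List.ofFn (Fin.cons (h 0) (k'.insertNth x (h ∘ Fin.succ)))
          = h 0 :: List.ofFn (k'.insertNth x (h ∘ Fin.succ)) by
        rw [List.ofFn_succ]; simp [Fin.cons_succ]]
      rw [IH k' x (h ∘ Fin.succ)]
      rw [show (List.ofFn h) = h 0 :: List.ofFn (h ∘ Fin.succ) by
        rw [List.ofFn_succ]; rfl]
      simp [Fin.val_succ, List.take_succ_cons, List.drop_succ_cons]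

end ofins

lemma take_ofFn_succ {p : ℕ} {α : Type*} (h : Fin p → α) (k : Fin p) :
    (List.ofFn h).take ((k:ℕ)+1) = (List.ofFn h).take (k:ℕ) ++ [h k] := by
  rw [← List.take_concat_get' _ _ (by simp [k.isLt])]
  congr 1
  simp

lemma drop_ofFn {p : ℕ} {α : Type*} (h : Fin p → α) (k : Fin p) :
    (List.ofFn h).drop (k:ℕ) = h k :: (List.ofFn h).drop ((k:ℕ)+1) := by
  rw [List.drop_eq_getElem_cons (by simp [k.isLt])]
  congr 1
  simp


section combinat
variable {q : ℕ}

/-- extend a permutation of `Fin q` to `Fin (q+1)` fixing `0`. -/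
def ds0 (t : Perm (Fin q)) : Perm (Fin (q+1)) := Equiv.Perm.decomposeFin.symm (0, t)

@[simp] lemma ds0_zero (t : Perm (Fin q)) : ds0 t 0 = 0 :=
  Equiv.Perm.decomposeFin_symm_apply_zero 0 t

@[simp] lemma ds0_succ (t : Perm (Fin q)) (i : Fin q) : ds0 t i.succ = (t i).succ := by
  simp [ds0, Equiv.Perm.decomposeFin_symm_apply_succ]

@[simp] lemma sign_ds0 (t : Perm (Fin q)) : Perm.sign (ds0 t) = Perm.sign t := by
  simp [ds0, Equiv.Perm.decomposeFin.symm_sign]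

/-- the permutation sending `k ↦ j` and `k.succAbove i ↦ j.succAbove (t i)`. -/
def EE (k j : Fin (q+1)) (t : Perm (Fin q)) : Perm (Fin (q+1)) :=
  (Fin.cycleRange j)⁻¹ * ds0 t * Fin.cycleRange k

@[simp] lemma EE_apply_k (k j : Fin (q+1)) (t : Perm (Fin q)) : EE k j t k = j := by
  simp [EE, Perm.mul_apply, Fin.cycleRange_self, Perm.inv_def, Equiv.symm_apply_eq,
    Fin.cycleRange_self]

@[simp] lemma EE_apply_succAbove (k j : Fin (q+1)) (t : Perm (Fin q)) (i : Fin q) :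
    EE k j t (k.succAbove i) = j.succAbove (t i) := by
  simp [EE, Perm.mul_apply, Fin.cycleRange_succAbove, Perm.inv_def, Equiv.symm_apply_eq]

lemma sign_EE (k j : Fin (q+1)) (t : Perm (Fin q)) :
    (Perm.sign (EE k j t) : ℤ) = (-1)^((k:ℕ)+(j:ℕ)) * (Perm.sign t : ℤ) := by
  simp [EE, Fin.sign_cycleRange, pow_add]
  ring

lemma EE_bijective (k : Fin (q+1)) :
    Function.Bijective (fun jt : Fin (q+1) × Perm (Fin q) => EE k jt.1 jt.2) := by
  constructor
  · rintro ⟨j, t⟩ ⟨j', t'⟩ h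
    simp only at h
    have hj : j = j' := by
      have := congrArg (fun u : Perm (Fin (q+1)) => u k) h
      simpa using this
    subst hj
    have ht : t = t' := by
      ext i
      have := congrArg (fun u : Perm (Fin (q+1)) => u (k.succAbove i)) h
      simp only [EE_apply_succAbove] at this
      have := Fin.succAbove_right_injective (p := j) this
      simp [this]
    simp [ht]
  · intro u
    refine ⟨⟨u k, (Equiv.Perm.decomposeFin
      (Fin.cycleRange (u k) * u * (Fin.cycleRange k)⁻¹)).2⟩, ?_⟩
    set v : Perm (Fin (q+1)) := Fin.cycleRange (u k) * u * (Fin.cycleRange k)⁻¹ with hv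
    have hv0 : v 0 = 0 := by
      have h1 : ((Fin.cycleRange k)⁻¹ : Perm (Fin (q+1))) 0 = k := by
        rw [Perm.inv_def, Equiv.symm_apply_eq, Fin.cycleRange_self]
      simp only [hv, Perm.mul_apply, h1]
      exact Fin.cycleRange_self _
    have hd : Equiv.Perm.decomposeFin.symm ((Equiv.Perm.decomposeFin v).1,
        (Equiv.Perm.decomposeFin v).2) = v := by
      simp
    have h1 : (Equiv.Perm.decomposeFin v).1 = 0 := by
      have h2 := Equiv.Perm.decomposeFin_symm_apply_zero (Equiv.Perm.decomposeFin v).1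
        (Equiv.Perm.decomposeFin v).2
      rw [hd] at h2
      rw [← h2, hv0]
    have hds : ds0 (Equiv.Perm.decomposeFin v).2 = v := by
      rw [ds0, ← h1, hd]
    show EE k (u k) _ = u
    rw [EE, hds, hv]
    group

lemma master {M : Type*} [AddCommMonoid M] (k : Fin (q+1)) (F : Perm (Fin (q+1)) → M) :
    ∑ u : Perm (Fin (q+1)), F u
      = ∑ j : Fin (q+1), ∑ t : Perm (Fin q), F (EE k j t) := by
  have h := Fintype.sum_bijective _ (EE_bijective k)
    (fun jt : Fin (q+1) × Perm (Fin q) => F (EE k jt.1 jt.2)) F (fun x => rfl)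
  rw [← h, Fintype.sum_prod_type]

end combinat

section group2
variable {q : ℕ} {α : Type*} {M : Type*} [AddCommGroup M]

lemma comp_EE (f : Fin (q+1) → α) (k j : Fin (q+1)) (t : Perm (Fin q)) :
    f ∘ (EE k j t) = k.insertNth (f j) ((f ∘ j.succAbove) ∘ t) := by
  funext m
  refine Fin.succAboveCases k ?_ ?_ m
  · simp [Fin.insertNth_apply_same]
  · intro i
    simp [Fin.insertNth_apply_succAbove]

lemma groupk (k : Fin (q+1)) (f : Fin (q+1) → α) (Φ : (Fin (q+1) → α) → M) :
    ∑ t : Perm (Fin (q+1)), (Perm.sign t : ℤ) • Φ (f ∘ t)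
      = ∑ j : Fin (q+1), ∑ t : Perm (Fin q),
          ((-1)^((k:ℕ)+(j:ℕ)) * (Perm.sign t : ℤ)) •
            Φ (k.insertNth (f j) ((f ∘ j.succAbove) ∘ t)) := by
  rw [master k]
  refine Finset.sum_congr rfl fun j _ => Finset.sum_congr rfl fun t _ => ?_
  rw [sign_EE, comp_EE]

lemma EE_inv_comp (g : Fin (q+1) → α) (j : Fin (q+1)) (t : Perm (Fin q)) :
    g ∘ ⇑((EE 0 j t)⁻¹) = j.insertNth (g 0) ((g ∘ Fin.succ) ∘ ⇑(t⁻¹)) := by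
  funext m
  refine Fin.succAboveCases j ?_ ?_ m
  · have h : (EE 0 j t)⁻¹ j = 0 := by
      rw [Perm.inv_def, Equiv.symm_apply_eq]
      exact (EE_apply_k 0 j t).symm
    simp only [Function.comp_apply, h]
    simp [Fin.insertNth_apply_same]
  · intro i
    have h : (EE 0 j t)⁻¹ (j.succAbove i) = (t⁻¹ i).succ := by
      rw [Perm.inv_def, Equiv.symm_apply_eq]
      rw [← Fin.zero_succAbove, EE_apply_succAbove]
      simp
    simp only [Function.comp_apply, h]
    simp [Fin.insertNth_apply_succAbove]

lemma groupinv (g : Fin (q+1) → α) (Φ : (Fin (q+1) → α) → M) :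
    ∑ t : Perm (Fin (q+1)), (Perm.sign t : ℤ) • Φ (g ∘ t)
      = ∑ j : Fin (q+1), ∑ t : Perm (Fin q),
          ((-1)^(j:ℕ) * (Perm.sign t : ℤ)) •
            Φ (j.insertNth (g 0) ((g ∘ Fin.succ) ∘ t)) := by
  have h1 : ∑ t : Perm (Fin (q+1)), (Perm.sign t : ℤ) • Φ (g ∘ t)
      = ∑ t : Perm (Fin (q+1)), (Perm.sign t : ℤ) • Φ (g ∘ ⇑(t⁻¹)) := by
    rw [← Equiv.sum_comp (Equiv.inv (Perm (Fin (q+1))))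
      (fun t => (Perm.sign t : ℤ) • Φ (g ∘ ⇑(t⁻¹)))]
    simp
  rw [h1, master 0]
  refine Finset.sum_congr rfl fun j _ => ?_
  rw [← Equiv.sum_comp (Equiv.inv (Perm (Fin q)))
      (fun t => ((-1)^(j:ℕ) * (Perm.sign t : ℤ)) • Φ (j.insertNth (g 0) ((g ∘ Fin.succ) ∘ t)))]
  refine Finset.sum_congr rfl fun t _ => ?_
  rw [EE_inv_comp]
  have : (Perm.sign (EE 0 j t) : ℤ) = (-1)^(j:ℕ) * (Perm.sign t : ℤ) := by
    rw [sign_EE]; simp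
  rw [this]
  simp
end group2


section core
variable {n : ℕ}

def JJ (p : ℕ) (u : U n) (k : ℕ) (f : Fin p → Fin (2*n)) : U n :=
  ∑ t : Perm (Fin p), (Perm.sign t : ℤ) •
    (W ((List.ofFn (f ∘ t)).take k) * u * W ((List.ofFn (f ∘ t)).drop k))

def DD (p : ℕ) (x : Fin (2*n)) (kF : Fin p) (f : Fin p → Fin (2*n)) : U n :=
  ∑ t : Perm (Fin p), (Perm.sign t : ℤ) •
    (W ((List.ofFn (f ∘ t)).take (kF:ℕ)) * σσ n x ((f ∘ t) kF) *
      W ((List.ofFn (f ∘ t)).drop ((kF:ℕ)+1)))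

lemma brkt_eq_W (p : ℕ) (f : Fin p → Fin (2*n)) :
    brkt n p f = ∑ t : Perm (Fin p), (Perm.sign t : ℤ) • W (List.ofFn (f ∘ t)) := by
  unfold brkt
  refine Finset.sum_congr rfl fun t _ => ?_
  rw [W, List.map_ofFn]
  rfl

lemma JJ_zero (p : ℕ) (u : U n) (f : Fin p → Fin (2*n)) :
    JJ p u 0 f = u * brkt n p f := by
  rw [brkt_eq_W, Finset.mul_sum]
  unfold JJ
  refine Finset.sum_congr rfl fun t _ => ?_
  rw [List.take_zero, List.drop_zero, W_nil, one_mul, mul_smul_comm]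

lemma INS_step (p : ℕ) (x : Fin (2*n)) (kF : Fin p) (f : Fin p → Fin (2*n)) :
    JJ p (σ n x) ((kF:ℕ)+1) f + JJ p (σ n x) (kF:ℕ) f = DD p x kF f := by
  unfold JJ DD
  rw [← Finset.sum_add_distrib]
  refine Finset.sum_congr rfl fun t _ => ?_
  rw [← smul_add (M := ℤ) (A := U n)]
  congr 1
  rw [take_ofFn_succ (f ∘ t) kF, drop_ofFn (f ∘ t) kF, W_append, W_cons, σσ]
  simp only [W_cons, W_nil, mul_one, mul_add, add_mul, mul_assoc]
  abel

lemma Jss_step (p : ℕ) (x y : Fin (2*n)) (kF : Fin p) (f : Fin p → Fin (2*n)) :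
    JJ p (σσ n x y) ((kF:ℕ)+1) f
      = JJ p (σσ n x y) (kF:ℕ) f
        + (∑ t : Perm (Fin p), (Perm.sign t : ℤ) • (gmat n x ((f ∘ t) kF) •
            (W ((List.ofFn (f ∘ t)).take (kF:ℕ)) * σ n y *
              W ((List.ofFn (f ∘ t)).drop ((kF:ℕ)+1)))))
        + (∑ t : Perm (Fin p), (Perm.sign t : ℤ) • (gmat n y ((f ∘ t) kF) •
            (W ((List.ofFn (f ∘ t)).take (kF:ℕ)) * σ n x *
              W ((List.ofFn (f ∘ t)).drop ((kF:ℕ)+1))))) := by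
  unfold JJ
  rw [← Finset.sum_add_distrib, ← Finset.sum_add_distrib]
  refine Finset.sum_congr rfl fun t _ => ?_
  rw [← smul_add (M := ℤ) (A := U n), ← smul_add (M := ℤ) (A := U n)]
  congr 1
  rw [take_ofFn_succ (f ∘ t) kF, drop_ofFn (f ∘ t) kF, W_append, W_cons]
  simp only [W_cons, W_nil, mul_one]
  rw [mul_assoc (W ((List.ofFn (f ∘ t)).take (kF:ℕ))) (σ n ((f ∘ t) kF)) (σσ n x y),
    sigma_comm x y ((f ∘ t) kF)]
  simp only [mul_add, add_mul, mul_smul_comm, smul_mul_assoc, mul_assoc]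

end core


section grouped
variable {n : ℕ}

lemma take_insert_self {α : Type*} (L : List α) (k : ℕ) (hk : k ≤ L.length) (x : α) :
    (L.take k ++ x :: L.drop k).take k = L.take k :=
  List.take_left' (by rw [List.length_take]; omega)

lemma drop_insert_self {α : Type*} (L : List α) (k : ℕ) (hk : k ≤ L.length) (x : α) :
    (L.take k ++ x :: L.drop k).drop (k+1) = L.drop k := by
  rw [show L.take k ++ x :: L.drop k = (L.take k ++ [x]) ++ L.drop k by
    simp [List.append_assoc]]
  exact List.drop_left' (by rw [List.length_append, List.length_take]; simp; omega)

lemma DD_grouped {q : ℕ} (x : Fin (2*n)) (kF : Fin (q+1)) (f : Fin (q+1) → Fin (2*n)) :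
    DD (q+1) x kF f
      = ∑ j : Fin (q+1), ((-1)^((kF:ℕ)+(j:ℕ)) : ℤ) •
          JJ q (σσ n x (f j)) (kF:ℕ) (f ∘ j.succAbove) := by
  unfold DD
  refine (groupk kF f (fun h => W ((List.ofFn h).take (kF:ℕ)) * σσ n x (h kF) *
      W ((List.ofFn h).drop ((kF:ℕ)+1)))).trans ?_
  refine Finset.sum_congr rfl fun j _ => ?_
  rw [JJ, Finset.smul_sum (M := ℤ) (N := U n)]
  refine Finset.sum_congr rfl fun t _ => ?_
  rw [mul_smul]
  congr 1
  rw [ofFn_insertNth, Fin.insertNth_apply_same,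
    take_insert_self _ _ (by simp [kF.is_le]) _,
    drop_insert_self _ _ (by simp [kF.is_le]) _]

lemma corr_grouped {q : ℕ} (x y : Fin (2*n)) (kF : Fin (q+1)) (f : Fin (q+1) → Fin (2*n)) :
    (∑ t : Perm (Fin (q+1)), (Perm.sign t : ℤ) • (gmat n x ((f ∘ t) kF) •
        (W ((List.ofFn (f ∘ t)).take (kF:ℕ)) * σ n y *
          W ((List.ofFn (f ∘ t)).drop ((kF:ℕ)+1)))))
      = ∑ j : Fin (q+1), ((-1)^((kF:ℕ)+(j:ℕ)) : ℤ) •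
          (gmat n x (f j) • JJ q (σ n y) (kF:ℕ) (f ∘ j.succAbove)) := by
  refine (groupk kF f (fun h => gmat n x (h kF) •
      (W ((List.ofFn h).take (kF:ℕ)) * σ n y *
        W ((List.ofFn h).drop ((kF:ℕ)+1))))).trans ?_
  refine Finset.sum_congr rfl fun j _ => ?_
  rw [JJ, Finset.smul_sum, Finset.smul_sum (M := ℤ) (N := U n)]
  refine Finset.sum_congr rfl fun t _ => ?_
  rw [mul_smul]
  congr 1
  rw [ofFn_insertNth, Fin.insertNth_apply_same,
    take_insert_self _ _ (by simp [kF.is_le]) _,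
    drop_insert_self _ _ (by simp [kF.is_le]) _]
  exact smul_comm _ _ _

lemma G1 {p : ℕ} (x : Fin (2*n)) (f : Fin p → Fin (2*n)) :
    brkt n (p+1) (Fin.cons x f)
      = ∑ j : Fin (p+1), ((-1)^(j:ℕ) : ℤ) • JJ p (σ n x) (j:ℕ) f := by
  rw [brkt_eq_W]
  refine (groupinv (Fin.cons x f) (fun h => W (List.ofFn h))).trans ?_
  refine Finset.sum_congr rfl fun j _ => ?_
  rw [JJ, Finset.smul_sum (M := ℤ) (N := U n)]
  refine Finset.sum_congr rfl fun t _ => ?_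
  rw [mul_smul]
  congr 1
  rw [show ((Fin.cons x f : Fin (p+1) → Fin (2*n)) ∘ Fin.succ) = f by
      funext i; simp [Fin.cons_succ]]
  rw [show (Fin.cons x f : Fin (p+1) → Fin (2*n)) 0 = x from Fin.cons_zero _ _]
  rw [ofFn_insertNth, W_append, W_cons, ← mul_assoc]

end grouped


section final
variable {n : ℕ}

def NN (n : ℕ) : Submodule ℚ (U n) :=
  Omega n ⊔ Submodule.span ℚ {x | ∃ b c, ∃ w ∈ Omega n, x = σσ n b c * w}

lemma brkt_mem (p : ℕ) (f : Fin p → Fin (2*n)) : brkt n p f ∈ NN n :=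
  Submodule.mem_sup_left (Submodule.subset_span ⟨p, f, rfl⟩)

lemma ss_brkt_mem (b c : Fin (2*n)) (p : ℕ) (f : Fin p → Fin (2*n)) :
    σσ n b c * brkt n p f ∈ NN n :=
  Submodule.mem_sup_right
    (Submodule.subset_span ⟨b, c, brkt n p f, Submodule.subset_span ⟨p, f, rfl⟩, rfl⟩)

lemma zmem (z : ℤ) {v : U n} (h : v ∈ NN n) : z • v ∈ NN n := by
  rw [← Int.cast_smul_eq_zsmul ℚ]
  exact Submodule.smul_mem _ _ h

lemma qmem (z : ℚ) {v : U n} (h : v ∈ NN n) : z • v ∈ NN n :=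
  Submodule.smul_mem _ _ h

lemma main : ∀ p : ℕ, ∀ (x : Fin (2*n)) (f : Fin p → Fin (2*n)) (k : ℕ),
    k ≤ p → JJ p (σ n x) k f ∈ NN n := by
  intro p
  induction p using Nat.strong_induction_on with
  | _ p SIH =>
  -- σσ-insertions at smaller length
  have Jss : ∀ q, q < p → ∀ (x y : Fin (2*n)) (g : Fin q → Fin (2*n)) (k : ℕ),
      k ≤ q → JJ q (σσ n x y) k g ∈ NN n := by
    intro q hq x y g k
    induction k with
    | zero =>
      intro _
      rw [JJ_zero]
      exact ss_brkt_mem x y q g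
    | succ k IHk =>
      intro hk1
      have hklt : k < q := hk1
      obtain ⟨q', rfl⟩ : ∃ q', q = q' + 1 := ⟨q - 1, by omega⟩
      have hstep := Jss_step (q'+1) x y ⟨k, hklt⟩ g
      rw [show ((⟨k, hklt⟩ : Fin (q'+1)) : ℕ) = k from rfl] at hstep
      rw [hstep]
      refine add_mem (add_mem (IHk (by omega)) ?_) ?_
      · rw [corr_grouped x y ⟨k, hklt⟩ g]
        refine Submodule.sum_mem _ fun j _ => ?_
        refine zmem _ (qmem _ ?_)
        exact SIH q' (by omega) y (g ∘ Fin.succAbove j) k (by omega)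
      · rw [corr_grouped y x ⟨k, hklt⟩ g]
        refine Submodule.sum_mem _ fun j _ => ?_
        refine zmem _ (qmem _ ?_)
        exact SIH q' (by omega) x (g ∘ Fin.succAbove j) k (by omega)
  -- DD terms
  have hDD : ∀ (x : Fin (2*n)) (f : Fin p → Fin (2*n)) (kF : Fin p),
      DD p x kF f ∈ NN n := by
    intro x f kF
    have hp : 0 < p := kF.pos
    obtain ⟨q, rfl⟩ : ∃ q, p = q + 1 := ⟨p - 1, by omega⟩
    rw [DD_grouped]
    refine Submodule.sum_mem _ fun j _ => zmem _ ?_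
    exact Jss q (by omega) x (f j) (f ∘ Fin.succAbove j) (kF : ℕ) kF.is_le
  intro x f k hk
  -- telescoping
  have hA : ∀ k : ℕ, k ≤ p →
      JJ p (σ n x) k f - ((-1 : ℤ)^k) • JJ p (σ n x) 0 f ∈ NN n := by
    intro k
    induction k with
    | zero =>
      intro _
      simp only [pow_zero, one_smul, sub_self]
      exact zero_mem _
    | succ k IHk =>
      intro hk1
      have hklt : k < p := hk1
      have hstep := INS_step p x ⟨k, hklt⟩ f
      rw [show ((⟨k, hklt⟩ : Fin p) : ℕ) = k from rfl] at hstep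
      have hns : ((-1 : ℤ)^(k+1)) • JJ p (σ n x) 0 f
          = -(((-1 : ℤ)^k) • JJ p (σ n x) 0 f) := by
        rw [pow_succ, mul_neg_one, neg_smul]
      have h1 : JJ p (σ n x) (k+1) f - ((-1 : ℤ)^(k+1)) • JJ p (σ n x) 0 f
          = DD p x ⟨k, hklt⟩ f
            - (JJ p (σ n x) k f - ((-1 : ℤ)^k) • JJ p (σ n x) 0 f) := by
        rw [hns, ← hstep]
        abel
      rw [h1]
      exact sub_mem (hDD x f ⟨k, hklt⟩) (IHk (by omega))
  -- conclude for k = 0 via G1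
  have h0 : JJ p (σ n x) 0 f ∈ NN n := by
    have hptw : ∀ j : Fin (p+1), ((-1 : ℤ)^(j:ℕ)) • JJ p (σ n x) (j:ℕ) f
        = ((-1 : ℤ)^(j:ℕ)) •
            (JJ p (σ n x) (j:ℕ) f - ((-1 : ℤ)^(j:ℕ)) • JJ p (σ n x) 0 f)
          + JJ p (σ n x) 0 f := by
      intro j
      rw [smul_sub (M := ℤ) (A := U n), smul_smul, ← mul_pow]
      norm_num
    have hsum : brkt n (p+1) (Fin.cons x f)
        = (∑ j : Fin (p+1), ((-1 : ℤ)^(j:ℕ)) •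
            (JJ p (σ n x) (j:ℕ) f - ((-1 : ℤ)^(j:ℕ)) • JJ p (σ n x) 0 f))
          + ((p+1 : ℤ)) • JJ p (σ n x) 0 f := by
      rw [G1 x f, Finset.sum_congr rfl fun j _ => hptw j, Finset.sum_add_distrib,
        Finset.sum_const, Finset.card_univ, Fintype.card_fin, ← natCast_zsmul]
      norm_num
    have hmem : ((p+1 : ℤ)) • JJ p (σ n x) 0 f ∈ NN n := by
      have := brkt_mem (p+1) (Fin.cons x f)
      rw [hsum] at this
      have hs : (∑ j : Fin (p+1), ((-1 : ℤ)^(j:ℕ)) •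
          (JJ p (σ n x) (j:ℕ) f - ((-1 : ℤ)^(j:ℕ)) • JJ p (σ n x) 0 f)) ∈ NN n :=
        Submodule.sum_mem _ fun j _ => zmem _ (hA (j:ℕ) j.is_le)
      have h2 := sub_mem this hs
      simpa using h2
    have hq : ((p+1 : ℚ)) • JJ p (σ n x) 0 f ∈ NN n := by
      have he : ((p+1 : ℤ)) • JJ p (σ n x) 0 f = ((p+1 : ℚ)) • JJ p (σ n x) 0 f := by
        rw [← Int.cast_smul_eq_zsmul ℚ]
        congr 1
        push_cast
        ring
      rwa [he] at hmem
    have := qmem ((p+1 : ℚ))⁻¹ hq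
    rwa [smul_smul, inv_mul_cancel₀ (by positivity), one_smul] at this
  have hfin := add_mem (hA k hk) (zmem ((-1 : ℤ)^k) h0)
  simpa using hfin

end final

/-- For every fermionic generator `σₐ` and every antisymmetrized monomial
`[a₁ … a_p]`, the product `σₐ·[a₁ … a_p]` lies in `Ω + Σ_{b,c} σ_{bc} Ω`, i.e. in the span of
the elements `ω` and `σ_{bc} ω′` with `ω, ω′ ∈ Ω`:  `σₐ Ω ⊆ U₁ ⊗ Ω` in the filtration by
degree in the bosonic generators. -/
theorem stmt19 (n : ℕ) (hn : 1 ≤ n) (a : Fin (2*n)) (p : ℕ) (f : Fin p → Fin (2*n)) :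
    σ n a * brkt n p f ∈
      Omega n ⊔ Submodule.span ℚ {x | ∃ b c, ∃ w ∈ Omega n, x = σσ n b c * w} := by
  rw [← JJ_zero]
  exact main p a f 0 (Nat.zero_le p)

end
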